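/- The synchronous composition of plain transition structures is associative up to equivalence: for criteria Y ⊆ P1 × P2, Y' ⊆ P2 × P3, we have (T1 ∥_Y T2) ∥_{Y'} T3 ≡ T1 ∥_Y (T2 ∥_{Y'} T3), where in each expression the criteria are regarded as criteria between the appropriate (inherited) property sets. -/

import Mathlib

/-- A plain transition structure with property set (index type) `P` and
property values in `V`: properties are partial functions, modelled with
`Option`. -/
structure PTS (V : Type) (P : Type) where
  Q : Type
  isState : Q → Prop
  step : Q → Q → Prop
  val : P → Q → Option V
  init : Q

namespace PTS
variable {V P P1 P2 P3 : Type}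

/-- Compatibility of a pair of component states with respect to the
synchronisation criteria `Y`: for every criterion, the two property values
agree whenever both are defined. -/
def compatible (T1 : PTS V P1) (T2 : PTS V P2) (Y : Set (P1 × P2))
    (q : T1.Q × T2.Q) : Prop :=
  T1.isState q.1 ∧ T2.isState q.2 ∧
    ∀ pp ∈ Y, ∀ v1 v2, T1.val pp.1 q.1 = some v1 → T2.val pp.2 q.2 = some v2 → v1 = v2

/-- Synchronous composition of plain transition structures with respect to
synchronisation criteria `Y`: states are the compatible pairs, a step lets
either component or both step, properties are inherited componentwise, and
the initial state is the pair of initial states. -/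
def comp (T1 : PTS V P1) (T2 : PTS V P2) (Y : Set (P1 × P2)) : PTS V (P1 ⊕ P2) where
  Q := T1.Q × T2.Q
  isState := compatible T1 T2 Y
  step q q' := compatible T1 T2 Y q ∧ compatible T1 T2 Y q' ∧
    (T1.step q.1 q'.1 ∨ q.1 = q'.1) ∧ (T2.step q.2 q'.2 ∨ q.2 = q'.2) ∧
    ¬(q.1 = q'.1 ∧ q.2 = q'.2)
  val p q := Sum.elim (fun a => T1.val a q.1) (fun b => T2.val b q.2) p
  init := (T1.init, T2.init)

/-- Equivalence of plain transition structures: bijections of states and of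
properties preserving states, adjacency, property values (codomains are
shared), and initial states. -/
def Equiv (T1 : PTS V P1) (T2 : PTS V P2) : Prop :=
  ∃ (f : T1.Q ≃ T2.Q) (F : P1 ≃ P2),
    (∀ q, T1.isState q ↔ T2.isState (f q)) ∧
    (∀ q q', T1.step q q' ↔ T2.step (f q) (f q')) ∧
    (∀ p q, T1.val p q = T2.val (F p) (f q)) ∧
    f T1.init = T2.init

section Assoc2
variable {V P1 P2 P3 : Type}
section Assoc
variable (T1 : PTS V P1) (T2 : PTS V P2) (T3 : PTS V P3)
  (Y : Set (P1 × P2)) (Y' : Set (P2 × P3))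

def YL : Set ((P1 ⊕ P2) × P3) := {pp | ∃ p2 p3, (p2, p3) ∈ Y' ∧ pp = (Sum.inr p2, p3)}
def YR : Set (P1 × (P2 ⊕ P3)) := {pp | ∃ p1 p2, (p1, p2) ∈ Y ∧ pp = (p1, Sum.inl p2)}

def C3 (q1 : T1.Q) (q2 : T2.Q) (q3 : T3.Q) : Prop :=
  T1.isState q1 ∧ T2.isState q2 ∧ T3.isState q3 ∧
  (∀ pp ∈ Y, ∀ v1 v2, T1.val pp.1 q1 = some v1 → T2.val pp.2 q2 = some v2 → v1 = v2) ∧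
  (∀ pp ∈ Y', ∀ v1 v2, T2.val pp.1 q2 = some v1 → T3.val pp.2 q3 = some v2 → v1 = v2)

lemma compatL_iff (q1 : T1.Q) (q2 : T2.Q) (q3 : T3.Q) :
    compatible (T1.comp T2 Y) T3 (YL (P1 := P1) Y') ((q1, q2), q3) ↔ C3 T1 T2 T3 Y Y' q1 q2 q3 := by
  constructor
  · rintro ⟨⟨h1, h2, hY⟩, h3, hY'⟩
    exact ⟨h1, h2, h3, hY, fun pp hpp => hY' (Sum.inr pp.1, pp.2) ⟨pp.1, pp.2, hpp, rfl⟩⟩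
  · rintro ⟨h1, h2, h3, hY, hY'⟩
    refine ⟨⟨h1, h2, hY⟩, h3, ?_⟩
    rintro pp ⟨p2, p3, hpp, rfl⟩
    exact hY' (p2, p3) hpp

lemma compatR_iff (q1 : T1.Q) (q2 : T2.Q) (q3 : T3.Q) :
    compatible T1 (T2.comp T3 Y') (YR (P3 := P3) Y) (q1, (q2, q3)) ↔ C3 T1 T2 T3 Y Y' q1 q2 q3 := by
  constructor
  · rintro ⟨h1, ⟨h2, h3, hY'⟩, hY⟩
    exact ⟨h1, h2, h3, fun pp hpp => hY (pp.1, Sum.inl pp.2) ⟨pp.1, pp.2, hpp, rfl⟩, hY'⟩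
  · rintro ⟨h1, h2, h3, hY, hY'⟩
    refine ⟨h1, ⟨h2, h3, hY'⟩, ?_⟩
    rintro pp ⟨p1, p2, hpp, rfl⟩
    exact hY (p1, p2) hpp

def S3 (q q' : T1.Q × T2.Q × T3.Q) : Prop :=
  C3 T1 T2 T3 Y Y' q.1 q.2.1 q.2.2 ∧ C3 T1 T2 T3 Y Y' q'.1 q'.2.1 q'.2.2 ∧
  (T1.step q.1 q'.1 ∨ q.1 = q'.1) ∧ (T2.step q.2.1 q'.2.1 ∨ q.2.1 = q'.2.1) ∧
  (T3.step q.2.2 q'.2.2 ∨ q.2.2 = q'.2.2) ∧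
  ¬(q.1 = q'.1 ∧ q.2.1 = q'.2.1 ∧ q.2.2 = q'.2.2)

lemma stepL_iff (q1 q1' : T1.Q) (q2 q2' : T2.Q) (q3 q3' : T3.Q) :
    ((T1.comp T2 Y).comp T3 (YL (P1 := P1) Y')).step ((q1, q2), q3) ((q1', q2'), q3') ↔
    S3 T1 T2 T3 Y Y' (q1, q2, q3) (q1', q2', q3') := by
  show _ ∧ _ ∧ _ ∧ _ ∧ _ ↔ _
  rw [compatL_iff, compatL_iff]
  constructor
  · rintro ⟨c, c', h12, h3, hne⟩
    refine ⟨c, c', ?_, ?_, h3, ?_⟩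
    · rcases h12 with ⟨_, _, h1, _⟩ | h
      · exact h1
      · exact Or.inr (show q1 = q1' from congrArg Prod.fst h)
    · rcases h12 with ⟨_, _, _, h2, _⟩ | h
      · exact h2
      · exact Or.inr (show q2 = q2' from congrArg Prod.snd h)
    · rintro ⟨e1, e2, e3⟩
      rcases h12 with ⟨_, _, _, _, hn⟩ | h
      · exact hn ⟨e1, e2⟩
      · exact hne ⟨h, e3⟩
  · rintro ⟨c, c', h1, h2, h3, hne⟩
    refine ⟨c, c', ?_, h3, ?_⟩
    · by_cases he : q1 = q1' ∧ q2 = q2'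
      · exact Or.inr (by simp [he.1, he.2]; rfl)
      · refine Or.inl ⟨⟨c.1, c.2.1, c.2.2.2.1⟩, ⟨c'.1, c'.2.1, c'.2.2.2.1⟩, h1, h2, he⟩
    · rintro ⟨h, e3⟩
      obtain ⟨e1, e2⟩ := Prod.mk.injEq .. ▸ h
      exact hne ⟨e1, e2, e3⟩

lemma stepR_iff (q1 q1' : T1.Q) (q2 q2' : T2.Q) (q3 q3' : T3.Q) :
    (T1.comp (T2.comp T3 Y') (YR (P3 := P3) Y)).step (q1, (q2, q3)) (q1', (q2', q3')) ↔
    S3 T1 T2 T3 Y Y' (q1, q2, q3) (q1', q2', q3') := by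
  show _ ∧ _ ∧ _ ∧ _ ∧ _ ↔ _
  rw [compatR_iff, compatR_iff]
  constructor
  · rintro ⟨c, c', h1, h23, hne⟩
    refine ⟨c, c', h1, ?_, ?_, ?_⟩
    · rcases h23 with ⟨_, _, h2, _⟩ | h
      · exact h2
      · exact Or.inr (show q2 = q2' from congrArg Prod.fst h)
    · rcases h23 with ⟨_, _, _, h3, _⟩ | h
      · exact h3
      · exact Or.inr (show q3 = q3' from congrArg Prod.snd h)
    · rintro ⟨e1, e2, e3⟩
      rcases h23 with ⟨_, _, _, _, hn⟩ | h
      · exact hn ⟨e2, e3⟩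
      · exact hne ⟨e1, h⟩
  · rintro ⟨c, c', h1, h2, h3, hne⟩
    refine ⟨c, c', h1, ?_, ?_⟩
    · by_cases he : q2 = q2' ∧ q3 = q3'
      · exact Or.inr (by simp [he.1, he.2]; rfl)
      · refine Or.inl ⟨⟨c.2.1, c.2.2.1, c.2.2.2.2⟩, ⟨c'.2.1, c'.2.2.1, c'.2.2.2.2⟩, h2, h3, he⟩
    · rintro ⟨e1, h⟩
      obtain ⟨e2, e3⟩ := Prod.mk.injEq .. ▸ h
      exact hne ⟨e1, e2, e3⟩

end Assoc
end Assoc2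

end PTS

/-- Synchronous composition of plain transition structures is associative up
to equivalence: `(T1 ∥_Y T2) ∥_{Y'} T3 ≡ T1 ∥_Y (T2 ∥_{Y'} T3)`, where in
each expression the criteria are regarded as criteria between the
appropriate inherited property sets. -/
theorem comp_assoc {V P1 P2 P3 : Type} (T1 : PTS V P1) (T2 : PTS V P2)
    (T3 : PTS V P3) (Y : Set (P1 × P2)) (Y' : Set (P2 × P3)) :
    ((T1.comp T2 Y).comp T3
      {pp : (P1 ⊕ P2) × P3 | ∃ p2 p3, (p2, p3) ∈ Y' ∧ pp = (Sum.inr p2, p3)}).Equiv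
    (T1.comp (T2.comp T3 Y')
      {pp : P1 × (P2 ⊕ P3) | ∃ p1 p2, (p1, p2) ∈ Y ∧ pp = (p1, Sum.inl p2)}) := by
  refine ⟨Equiv.prodAssoc T1.Q T2.Q T3.Q, Equiv.sumAssoc P1 P2 P3, ?_, ?_, ?_, rfl⟩
  · rintro ⟨⟨q1, q2⟩, q3⟩
    exact (PTS.compatL_iff T1 T2 T3 Y Y' q1 q2 q3).trans
      (PTS.compatR_iff T1 T2 T3 Y Y' q1 q2 q3).symm
  · rintro ⟨⟨q1, q2⟩, q3⟩ ⟨⟨q1', q2'⟩, q3'⟩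
    exact (PTS.stepL_iff T1 T2 T3 Y Y' q1 q1' q2 q2' q3 q3').trans
      (PTS.stepR_iff T1 T2 T3 Y Y' q1 q1' q2 q2' q3 q3').symm
  · rintro (⟨p1 | p2⟩ | p3) ⟨⟨q1, q2⟩, q3⟩ <;> rfl
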